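/- arXiv:1301.0206 — 2 statements merged into one kernel-verified Lean document; each statement's English description precedes it below -/
import Mathlib

section
/- Let ℓ ∈ ℝⁿ be a length vector and suppose n ≤ d. Then the natural map φ: M_{d−1}(ℓ) → M_d(ℓ) induced by the inclusion ℝ^{d−1} ≅ ℝ^{d−1}×{0} ⊂ ℝ^d is surjective. -/
noncomputable section

/-- The property of being a rotation matrix (an element of `SO(d)`). -/
def IsSOMat {d : ℕ} (A : Matrix (Fin d) (Fin d) ℝ) : Prop :=
  A * A.transpose = 1 ∧ A.det = 1

/-- A length vector: all entries positive. -/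
def IsLengthVector {n : ℕ} (ℓ : Fin n → ℝ) : Prop := ∀ i, 0 < ℓ i

/-- A subset `J ⊆ {1,…,n}` is `ℓ`-short if `∑_{j∈J} ℓ_j < ∑_{i∉J} ℓ_i`. -/
def IsShort {n : ℕ} (ℓ : Fin n → ℝ) (J : Finset (Fin n)) : Prop :=
  ∑ j ∈ J, ℓ j < ∑ j ∈ Jᶜ, ℓ j

/-- A subset is `ℓ`-long if its complement is `ℓ`-short. -/
def IsLong {n : ℕ} (ℓ : Fin n → ℝ) (J : Finset (Fin n)) : Prop :=
  IsShort ℓ Jᶜ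

/-- `ℓ` is generic: no subset is `ℓ`-median. -/
def IsGeneric {n : ℕ} (ℓ : Fin n → ℝ) : Prop :=
  ∀ J : Finset (Fin n), ∑ j ∈ J, ℓ j ≠ ∑ j ∈ Jᶜ, ℓ j

/-- `a_k(ℓ)`, computed with respect to a dominating index `m`: the number of
`ℓ`-short subsets `J` containing `m` with `|J| = k + 1`. -/
def aCount {n : ℕ} (ℓ : Fin n → ℝ) (m : Fin n) (k : ℕ) : ℕ :=
  Set.ncard {J : Finset (Fin n) | m ∈ J ∧ J.card = k + 1 ∧ IsShort ℓ J}

/-- The space of configurations whose quotient by the diagonal `SO(d)`-action is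
the moduli space `M_d(ℓ)`: `n`-tuples of unit vectors in `ℝ^d` with `∑ ℓ_i z_i = 0`,
topologized as a subspace of the product. -/
abbrev LinkCfg (d n : ℕ) (ℓ : Fin n → ℝ) : Type :=
  {z : Fin n → EuclideanSpace ℝ (Fin d) // (∀ i, ‖z i‖ = 1) ∧ ∑ i, ℓ i • z i = 0}

/-- The orbit relation of the diagonal `SO(d)`-action on configurations. -/
def soRel (d n : ℕ) (ℓ : Fin n → ℝ) (z w : LinkCfg d n ℓ) : Prop :=
  ∃ A : Matrix (Fin d) (Fin d) ℝ, IsSOMat A ∧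
    ∀ i, (w : Fin n → EuclideanSpace ℝ (Fin d)) i =
      Matrix.toEuclideanLin A ((z : Fin n → EuclideanSpace ℝ (Fin d)) i)

/-- The moduli space `M_d(ℓ) = {z ∈ (S^{d-1})^n : ∑ ℓ_i z_i = 0}/SO(d)`,
with the quotient topology. -/
abbrev ModuliSpace (d n : ℕ) (ℓ : Fin n → ℝ) : Type := Quot (soRel d n ℓ)

end

noncomputable section

/-- The isometric inclusion `ℝ^a → ℝ^b` (for `a ≤ b`) appending zero coordinates,
realizing `ℝ^a ≅ ℝ^a × {0} ⊆ ℝ^b`. -/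
def includeCoord (a b : ℕ) (x : EuclideanSpace ℝ (Fin a)) : EuclideanSpace ℝ (Fin b) :=
  WithLp.toLp 2 (fun j : Fin b => if h : (j : ℕ) < a then x ⟨j, h⟩ else 0)

end

open scoped RealInnerProductSpace

noncomputable section AuxIso

private def bE (d : ℕ) : Module.Basis (Fin d) ℝ (EuclideanSpace ℝ (Fin d)) := PiLp.basisFun 2 ℝ (Fin d)

private def Amat {d : ℕ} (F : EuclideanSpace ℝ (Fin d) ≃ₗᵢ[ℝ] EuclideanSpace ℝ (Fin d)) :
    Matrix (Fin d) (Fin d) ℝ :=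
  LinearMap.toMatrix (bE d) (bE d) (F.toLinearEquiv.toLinearMap : EuclideanSpace ℝ (Fin d) →ₗ[ℝ] _)

private lemma Amat_apply {d : ℕ} (F : EuclideanSpace ℝ (Fin d) ≃ₗᵢ[ℝ] EuclideanSpace ℝ (Fin d))
    (x : EuclideanSpace ℝ (Fin d)) : Matrix.toEuclideanLin (Amat F) x = F x := by
  have h : Matrix.toEuclideanLin (Amat F) = Matrix.toLin (bE d) (bE d) (Amat F) := by
    rw [Matrix.toEuclideanLin_eq_toLin]; rfl
  rw [h, Amat, Matrix.toLin_toMatrix]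
  rfl

private lemma Amat_entry {d : ℕ} (F : EuclideanSpace ℝ (Fin d) ≃ₗᵢ[ℝ] EuclideanSpace ℝ (Fin d))
    (i j : Fin d) : Amat F i j = F (bE d j) i := by
  simp [Amat, LinearMap.toMatrix_apply, bE, PiLp.basisFun_repr]

private lemma bE_apply (d : ℕ) (j : Fin d) : bE d j = EuclideanSpace.single j 1 := by
  simp [bE, PiLp.basisFun_apply]

private lemma real_inner_eq_sum {d : ℕ} (x y : EuclideanSpace ℝ (Fin d)) :
    ⟪x, y⟫ = ∑ k, x k * y k := by
  rw [PiLp.inner_apply]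
  simp [RCLike.inner_apply]
  exact Finset.sum_congr rfl fun k _ => mul_comm _ _

private lemma Amat_orth {d : ℕ} (F : EuclideanSpace ℝ (Fin d) ≃ₗᵢ[ℝ] EuclideanSpace ℝ (Fin d)) :
    Amat F * (Amat F).transpose = 1 := by
  rw [mul_eq_one_comm]
  ext i j
  have h : ∑ k, Amat F k i * Amat F k j = ⟪F (bE d i), F (bE d j)⟫ := by
    rw [real_inner_eq_sum]
    exact Finset.sum_congr rfl fun k _ => by rw [Amat_entry, Amat_entry]
  rw [Matrix.mul_apply]
  simp only [Matrix.transpose_apply]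
  rw [h, LinearIsometryEquiv.inner_map_map, bE_apply, bE_apply,
    EuclideanSpace.inner_single_left]
  simp [EuclideanSpace.single_apply, Matrix.one_apply, eq_comm]

private lemma Amat_trans {d : ℕ} (F G : EuclideanSpace ℝ (Fin d) ≃ₗᵢ[ℝ] EuclideanSpace ℝ (Fin d)) :
    Amat (F.trans G) = Amat G * Amat F := by
  rw [Amat, Amat, Amat, ← LinearMap.toMatrix_comp (bE d) (bE d) (bE d)]
  congr 1

/-- The coordinate-evaluation of a single vector. -/
private lemma coord_eq_inner {m : ℕ} (y : EuclideanSpace ℝ (Fin (m + 1))) :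
    y (Fin.last m) = ⟪EuclideanSpace.single (Fin.last m) (1 : ℝ), y⟫ := by
  rw [EuclideanSpace.inner_single_left]
  simp

private lemma sum_smul_apply {d n : ℕ} (ℓ : Fin n → ℝ) (v : Fin n → EuclideanSpace ℝ (Fin d))
    (j : Fin d) : (∑ i, ℓ i • v i) j = ∑ i, ℓ i * v i j := by
  have h : (∑ i, ℓ i • v i) j = ∑ i, (ℓ i • v i) j :=
    by rw [WithLp.ofLp_sum]; exact Finset.sum_apply (M := fun _ : Fin d => ℝ) j Finset.univ _
  rw [h]
  rfl

private lemma exists_so {m n : ℕ} (ℓ : Fin n → ℝ) (hℓ : IsLengthVector ℓ) (hnd : n ≤ m + 1)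
    (w : Fin n → EuclideanSpace ℝ (Fin (m + 1)))
    (hsum : ∑ i, ℓ i • w i = 0) :
    ∃ (F : EuclideanSpace ℝ (Fin (m + 1)) ≃ₗᵢ[ℝ] EuclideanSpace ℝ (Fin (m + 1)))
      (A : Matrix (Fin (m + 1)) (Fin (m + 1)) ℝ), IsSOMat A ∧
      (∀ x, Matrix.toEuclideanLin A x = F x) ∧
      (∀ i, F (w i) (Fin.last m) = 0) := by
  classical
  set V : Submodule ℝ (EuclideanSpace ℝ (Fin (m + 1))) := Submodule.span ℝ (Set.range w) with hV
  -- finrank bound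
  have hVfr : Module.finrank ℝ V ≤ m := by
    cases n with
    | zero =>
        have : Set.range w = ∅ := Set.range_eq_empty w
        rw [hV, this, Submodule.span_empty]
        simp
    | succ k =>
        set b : Fin k → EuclideanSpace ℝ (Fin (m + 1)) := fun j => w j.succ with hb
        have hT : Module.finrank ℝ (Submodule.span ℝ (Set.range b)) ≤ k := by
          have h := finrank_range_le_card (R := ℝ) b
          simpa [Set.finrank, Fintype.card_fin] using h
        have hw0 : w 0 = (-(ℓ 0)⁻¹) • ∑ j : Fin k, ℓ j.succ • w j.succ := by
          have h := hsum
          rw [Fin.sum_univ_succ] at h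
          have h2 : ℓ 0 • w 0 = -∑ j : Fin k, ℓ j.succ • w j.succ := by
            linear_combination (norm := module) h
          have h3 : (ℓ 0)⁻¹ • (ℓ 0 • w 0) = (ℓ 0)⁻¹ • (-∑ j : Fin k, ℓ j.succ • w j.succ) := by
            rw [h2]
          rw [smul_smul, inv_mul_cancel₀ (ne_of_gt (hℓ 0)), one_smul] at h3
          rw [h3, neg_smul, smul_neg]
        have hle : V ≤ Submodule.span ℝ (Set.range b) := by
          rw [hV, Submodule.span_le]
          rintro _ ⟨i, rfl⟩
          by_cases hi : i = 0
          · subst hi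
            rw [hw0]
            refine Submodule.smul_mem _ _ (Submodule.sum_mem _ fun j _ => ?_)
            exact Submodule.smul_mem _ _ (Submodule.subset_span ⟨j, rfl⟩)
          · obtain ⟨j, rfl⟩ := Fin.eq_succ_of_ne_zero hi
            exact Submodule.subset_span ⟨j, rfl⟩
        calc Module.finrank ℝ V ≤ Module.finrank ℝ (Submodule.span ℝ (Set.range b)) :=
              Submodule.finrank_mono hle
          _ ≤ k := hT
          _ ≤ m := by omega
  have hVne : V ≠ ⊤ := by
    intro h
    rw [h] at hVfr
    rw [finrank_top, finrank_euclideanSpace_fin] at hVfr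
    omega
  have hbot : Vᗮ ≠ ⊥ := by rwa [Ne, Submodule.orthogonal_eq_bot_iff]
  obtain ⟨u, huV, hu0⟩ := Submodule.ne_bot_iff _ |>.mp hbot
  set u' : EuclideanSpace ℝ (Fin (m + 1)) := ‖u‖⁻¹ • u with hu'def
  have hu'V : u' ∈ Vᗮ := Submodule.smul_mem _ _ huV
  have hu'norm : ‖u'‖ = 1 := by
    rw [hu'def, norm_smul, norm_inv, norm_norm, inv_mul_cancel₀ (norm_ne_zero_iff.mpr hu0)]
  set e : EuclideanSpace ℝ (Fin (m + 1)) := EuclideanSpace.single (Fin.last m) (1 : ℝ) with he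
  have henorm : ‖e‖ = 1 := by rw [he, EuclideanSpace.norm_single]; norm_num
  set g := Submodule.reflection (ℝ ∙ (u' - e))ᗮ with hg
  have hgu : g u' = e := Submodule.reflection_sub (by rw [hu'norm, henorm])
  have hkey : ∀ x ∈ V, g x (Fin.last m) = 0 := by
    intro x hx
    rw [coord_eq_inner (g x), ← he, ← hgu, LinearIsometryEquiv.inner_map_map]
    rw [real_inner_comm]
    exact (Submodule.mem_orthogonal V u').mp hu'V x hx
  have hdet : (Amat g).det = 1 ∨ (Amat g).det = -1 := by
    have h := congrArg Matrix.det (Amat_orth g)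
    rw [Matrix.det_mul, Matrix.det_transpose, Matrix.det_one] at h
    exact mul_self_eq_one_iff.mp h
  rcases hdet with h1 | h1
  · exact ⟨g, Amat g, ⟨Amat_orth g, h1⟩, Amat_apply g,
      fun i => hkey _ (Submodule.subset_span ⟨i, rfl⟩)⟩
  · -- compose with the reflection negating the last coordinate
    set ρ := Submodule.reflection (ℝ ∙ e)ᗮ with hρ
    have hρe : ρ e = -e := Submodule.reflection_orthogonalComplement_singleton_eq_neg e
    have hρfix : ∀ y : EuclideanSpace ℝ (Fin (m + 1)), y (Fin.last m) = 0 → ρ y = y := by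
      intro y hy
      refine Submodule.reflection_mem_subspace_eq_self ?_
      rw [Submodule.mem_orthogonal_singleton_iff_inner_right, he, ← coord_eq_inner y, hy]
    have hρmat : Amat ρ =
        Matrix.diagonal (fun i => if i = Fin.last m then (-1 : ℝ) else 1) := by
      ext i j
      rw [Amat_entry, bE_apply]
      by_cases hj : j = Fin.last m
      · subst hj
        rw [← he, hρe]
        by_cases hi : i = Fin.last m
        · subst hi; simp [Matrix.diagonal, he, EuclideanSpace.single_apply]
        · simp [Matrix.diagonal, he, EuclideanSpace.single_apply, hi, Ne.symm hi]
      · have hzero : (EuclideanSpace.single j (1 : ℝ)) (Fin.last m) = 0 := by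
          rw [EuclideanSpace.single_apply]
          simp [Ne.symm hj, hj]
        rw [hρfix _ hzero]
        rw [EuclideanSpace.single_apply]
        by_cases hij : i = j
        · subst hij; simp [Matrix.diagonal, hj]
        · simp [Matrix.diagonal, hij, Ne.symm hij]
    have hdetρ : (Amat ρ).det = -1 := by
      rw [hρmat, Matrix.det_diagonal]
      rw [Finset.prod_ite_eq' Finset.univ (Fin.last m) (fun _ => (-1 : ℝ))]
      simp
    refine ⟨g.trans ρ, Amat (g.trans ρ), ⟨Amat_orth _, ?_⟩, Amat_apply _, fun i => ?_⟩
    · rw [Amat_trans, Matrix.det_mul, hdetρ, h1]; norm_num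
    · have h0 : g (w i) (Fin.last m) = 0 := hkey _ (Submodule.subset_span ⟨i, rfl⟩)
      have : (g.trans ρ) (w i) = ρ (g (w i)) := rfl
      rw [this, hρfix _ h0, h0]

end AuxIso

/-- Let `ℓ ∈ ℝⁿ` be a length vector with `n ≤ d`. Then the natural map
`φ : M_{d-1}(ℓ) → M_d(ℓ)` induced by the inclusion `ℝ^{d-1} ≅ ℝ^{d-1} × {0} ⊆ ℝ^d`
is surjective.  (The map `φ` is characterized by sending the class of a configuration
`z` in `ℝ^{d-1}` to the class of the coordinatewise-included configuration in `ℝ^d`.) -/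
theorem natural_map_surjective (n d : ℕ) (ℓ : Fin n → ℝ)
    (hℓ : IsLengthVector ℓ) (hnd : n ≤ d)
    (φ : ModuliSpace (d - 1) n ℓ → ModuliSpace d n ℓ)
    (hφ : ∀ (z : LinkCfg (d - 1) n ℓ) (w : LinkCfg d n ℓ),
      (∀ i, (w : Fin n → EuclideanSpace ℝ (Fin d)) i =
          includeCoord (d - 1) d ((z : Fin n → EuclideanSpace ℝ (Fin (d - 1))) i)) →
      φ (Quot.mk _ z) = Quot.mk _ w) :
    Function.Surjective φ := by
  intro q
  induction q using Quot.ind with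
  | _ w => ?_
  cases d with
  | zero =>
      have hn : n = 0 := Nat.le_zero.mp hnd
      subst hn
      exact ⟨Quot.mk _ w, hφ w w (fun i => i.elim0)⟩
  | succ m =>
      obtain ⟨F, A, hSO, hFA, hlast⟩ := exists_so ℓ hℓ hnd w.1 w.2.2
      set y : Fin n → EuclideanSpace ℝ (Fin (m + 1)) := fun i => F (w.1 i) with hy
      have hynorm : ∀ i, ‖y i‖ = 1 := fun i => by
        rw [hy]
        rw [LinearIsometryEquiv.norm_map]
        exact w.2.1 i
      have hysum : ∑ i, ℓ i • y i = 0 := by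
        have h : ∑ i, ℓ i • y i = F (∑ i, ℓ i • w.1 i) := by
          rw [map_sum]
          exact Finset.sum_congr rfl fun i _ => by rw [hy, LinearIsometryEquiv.map_smul]
        rw [h, w.2.2, map_zero]
      have hylast : ∀ i, y i (Fin.last m) = 0 := fun i => hlast i
      set zf : Fin n → EuclideanSpace ℝ (Fin m) := fun i => WithLp.toLp 2 (fun k : Fin m => y i k.castSucc) with hzf
      have hznorm : ∀ i, ‖zf i‖ = 1 := by
        intro i
        have hsq : ∑ k : Fin m, ‖zf i k‖ ^ 2 = ∑ j : Fin (m + 1), ‖y i j‖ ^ 2 := by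
          rw [Fin.sum_univ_castSucc]
          rw [hylast i]
          simp [hzf]
        rw [EuclideanSpace.norm_eq, hsq, ← EuclideanSpace.norm_eq, hynorm i]
      have hzsum : ∑ i, ℓ i • zf i = 0 := by
        ext k
        have h1 : (∑ i, ℓ i • zf i) k = ∑ i, ℓ i * y i k.castSucc := sum_smul_apply ℓ zf k
        have h3 : ∑ i, ℓ i * y i k.castSucc = 0 := by
          rw [← sum_smul_apply ℓ y k.castSucc, hysum]
          rfl
        rw [h1, h3]
        rfl
      set z : LinkCfg m n ℓ := ⟨zf, hznorm, hzsum⟩ with hz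
      set w' : LinkCfg (m + 1) n ℓ := ⟨y, hynorm, hysum⟩ with hw'
      have hincl : ∀ i, (w' : Fin n → EuclideanSpace ℝ (Fin (m + 1))) i =
          includeCoord m (m + 1) ((z : Fin n → EuclideanSpace ℝ (Fin m)) i) := by
        intro i
        ext j
        rw [includeCoord]
        simp only [WithLp.ofLp_toLp]
        by_cases h : (j : ℕ) < m
        · rw [dif_pos h]
          have hjj : (⟨(j : ℕ), h⟩ : Fin m).castSucc = j := by
            apply Fin.ext
            rfl
          show y i j = zf i ⟨(j : ℕ), h⟩
          rw [hzf]
          show y i j = y i (⟨(j : ℕ), h⟩ : Fin m).castSucc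
          rw [hjj]
        · rw [dif_neg h]
          have hjl : j = Fin.last m := by
            apply Fin.ext
            have := j.isLt
            simp only [Fin.val_last]
            omega
          rw [hjl]
          exact hylast i
      refine ⟨Quot.mk _ z, ?_⟩
      rw [hφ z w' hincl]
      exact (Quot.sound ⟨A, hSO, fun i => (hFA (w.1 i)).symm⟩).symm
end

section
/- Let d ≥ 4 and 1 ≤ k < d−2. Let D^{d−1} ⊂ ℝ^{d−1} be the closed unit disc and let SO(d−2) act diagonally on (D^{d−1})^k, acting on each factor by rotations of ℝ^{d−1} fixing the first coordinate. Let X_d^k = (D^{d−1})^k / SO(d−2) and let ∂X_d^k ⊂ X_d^k be the image of ∂((D^{d−1})^k) (the set of k-tuples with at least one coordinate on the unit sphere S^{d−2}) under the quotient map. Then the inclusion ∂X_d^k ↪ X_d^k is a homotopy equivalence; in fact X_d^k deformation retracts onto ∂X_d^k. -/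
noncomputable section

/-- The last entry `ℓ_n` of a length vector. -/
def lastEntry {n : ℕ} (ℓ : Fin n → ℝ) : ℝ :=
  if h : 0 < n then ℓ ⟨n - 1, Nat.sub_lt h one_pos⟩ else 0

/-- The chain space `C_d(ℓ)`: tuples `(z_1,…,z_{n-1})` of unit vectors in `ℝ^d` with
`∑_{i=1}^{n-1} ℓ_i z_i = (-ℓ_n, 0, …, 0)`, topologized as a subspace of the product. -/
abbrev ChainCfg (d n : ℕ) (ℓ : Fin n → ℝ) : Type :=
  {z : Fin (n - 1) → EuclideanSpace ℝ (Fin d) //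
    (∀ i, ‖z i‖ = 1) ∧
    ∀ j : Fin d,
      (∑ i, ℓ (Fin.castLE (Nat.sub_le n 1) i) • z i) j =
        if (j : ℕ) = 0 then -lastEntry ℓ else 0}

/-- A `d × d` matrix fixes the first coordinate direction: its first column is `e₀`
and its first row is `e₀ᵀ`.  Together with `IsSOMat` this characterizes the copy of
`SO(d-1)` inside `SO(d)` acting on the last `d - 1` coordinates. -/
def FixesFirst {d : ℕ} (A : Matrix (Fin d) (Fin d) ℝ) : Prop :=
  (∀ j k : Fin d, (k : ℕ) = 0 → A j k = if (j : ℕ) = 0 then 1 else 0) ∧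
  (∀ j k : Fin d, (j : ℕ) = 0 → A j k = if (k : ℕ) = 0 then 1 else 0)

end

noncomputable section

/-- Tuples of `k` points of the closed unit disc `D^{d-1} ⊆ ℝ^{d-1}`. -/
abbrev DiscProd (d k : ℕ) : Type :=
  {x : Fin k → EuclideanSpace ℝ (Fin (d - 1)) // ∀ i, ‖x i‖ ≤ 1}

/-- The orbit relation of the diagonal `SO(d-2)`-action on `(D^{d-1})^k`, where
`SO(d-2)` acts on `ℝ^{d-1}` by rotations fixing the first coordinate. -/
def discRel (d k : ℕ) (x y : DiscProd d k) : Prop :=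
  ∃ A : Matrix (Fin (d - 1)) (Fin (d - 1)) ℝ, IsSOMat A ∧ FixesFirst A ∧
    ∀ i, (y : Fin k → EuclideanSpace ℝ (Fin (d - 1))) i =
      Matrix.toEuclideanLin A ((x : Fin k → EuclideanSpace ℝ (Fin (d - 1))) i)

/-- The quotient `X_d^k = (D^{d-1})^k / SO(d-2)` with the quotient topology. -/
abbrev DiscQuot (d k : ℕ) : Type := Quot (discRel d k)

/-- The subspace `∂X_d^k ⊆ X_d^k`: the image of the set of tuples having at least one
coordinate on the unit sphere. -/
def discQuotBoundary (d k : ℕ) : Set (DiscQuot d k) :=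
  Quot.mk (discRel d k) ''
    {x : DiscProd d k | ∃ i, ‖(x : Fin k → EuclideanSpace ℝ (Fin (d - 1))) i‖ = 1}

end


noncomputable section AuxDQ

namespace DQAux

open Matrix Module Finset

variable {d k : ℕ}

/-! ### Euclidean space helpers -/

lemma euc_inner_eq {n : ℕ} (x y : EuclideanSpace ℝ (Fin n)) :
    (inner ℝ x y : ℝ) = ∑ m, x m * y m := by
  simp [PiLp.inner_apply, RCLike.inner_apply, mul_comm]

lemma toEuc_apply {n : ℕ} (A : Matrix (Fin n) (Fin n) ℝ) (u : EuclideanSpace ℝ (Fin n))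
    (j : Fin n) : Matrix.toEuclideanLin A u j = ∑ m, A j m * u m := by
  simp [Matrix.toEuclideanLin_apply, Matrix.mulVec, dotProduct]

lemma toEuc_mul {n : ℕ} (A B : Matrix (Fin n) (Fin n) ℝ) (u : EuclideanSpace ℝ (Fin n)) :
    Matrix.toEuclideanLin (A * B) u = Matrix.toEuclideanLin A (Matrix.toEuclideanLin B u) := by
  ext j
  simp only [toEuc_apply, Matrix.mul_apply, Finset.sum_mul, Finset.mul_sum]
  rw [Finset.sum_comm]
  exact Finset.sum_congr rfl fun a _ => Finset.sum_congr rfl fun b _ => by ring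

/-! ### Linear combination maps and the isometry-from-Gram lemma -/

private def combo {N K : ℕ} (Z : Fin K → EuclideanSpace ℝ (Fin N)) :
    (Fin K → ℝ) →ₗ[ℝ] EuclideanSpace ℝ (Fin N) where
  toFun c := ∑ i, c i • Z i
  map_add' c c' := by simp [add_smul, Finset.sum_add_distrib]
  map_smul' r c := by simp [smul_smul, Finset.smul_sum]

private lemma combo_single {N K : ℕ} (Z : Fin K → EuclideanSpace ℝ (Fin N)) (i : Fin K) :
    combo Z (Pi.single i 1) = Z i := by
  simp [combo, Pi.single_apply, ite_smul]

private lemma norm_combo_eq {N K : ℕ} (Z W : Fin K → EuclideanSpace ℝ (Fin N))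
    (h : ∀ i j, (inner ℝ (Z i) (Z j) : ℝ) = inner ℝ (W i) (W j)) (c : Fin K → ℝ) :
    ‖combo Z c‖ = ‖combo W c‖ := by
  have key : (inner ℝ (combo Z c) (combo Z c) : ℝ) = inner ℝ (combo W c) (combo W c) := by
    simp only [combo, LinearMap.coe_mk, AddHom.coe_mk, sum_inner, inner_sum,
      real_inner_smul_left, real_inner_smul_right]
    exact Finset.sum_congr rfl fun i _ => Finset.sum_congr rfl fun j _ => by rw [h]
  have := congrArg Real.sqrt key
  rwa [real_inner_self_eq_norm_mul_norm, real_inner_self_eq_norm_mul_norm,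
    Real.sqrt_mul_self (norm_nonneg _), Real.sqrt_mul_self (norm_nonneg _)] at this

private lemma exists_isometry {N K : ℕ} (Z W : Fin K → EuclideanSpace ℝ (Fin N))
    (h : ∀ i j, (inner ℝ (Z i) (Z j) : ℝ) = inner ℝ (W i) (W j)) :
    ∃ F : (EuclideanSpace ℝ (Fin N)) →ₗᵢ[ℝ] EuclideanSpace ℝ (Fin N), ∀ i, F (Z i) = W i := by
  set P := combo Z with hP
  set Q := combo W with hQ
  have hnorm : ∀ c, ‖P c‖ = ‖Q c‖ := norm_combo_eq Z W h
  have hker : LinearMap.ker P ≤ LinearMap.ker Q := by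
    intro c hc
    rw [LinearMap.mem_ker] at hc ⊢
    have := hnorm c
    rw [hc, norm_zero] at this
    exact norm_eq_zero.mp this.symm
  let Qbar := (LinearMap.ker P).liftQ Q hker
  let Lmap : (LinearMap.range P) →ₗ[ℝ] EuclideanSpace ℝ (Fin N) :=
    Qbar.comp (P.quotKerEquivRange.symm.toLinearMap)
  have hLmap : ∀ c : Fin K → ℝ, Lmap ⟨P c, LinearMap.mem_range_self P c⟩ = Q c := by
    intro c
    have h1 : P.quotKerEquivRange.symm ⟨P c, LinearMap.mem_range_self P c⟩ =
        Submodule.Quotient.mk c := P.quotKerEquivRange_symm_apply_image c _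
    simp only [Lmap, LinearMap.comp_apply, LinearEquiv.coe_toLinearMap, h1]
    exact Submodule.liftQ_apply _ Q c
  have hLnorm : ∀ s : LinearMap.range P, ‖Lmap s‖ = ‖s‖ := by
    rintro ⟨sv, c, rfl⟩
    rw [hLmap c]
    exact (hnorm c).symm
  let L : (LinearMap.range P) →ₗᵢ[ℝ] EuclideanSpace ℝ (Fin N) := ⟨Lmap, hLnorm⟩
  refine ⟨L.extend, fun i => ?_⟩
  have hmem : Z i ∈ LinearMap.range P := ⟨Pi.single i 1, combo_single Z i⟩
  have h2 : L.extend (Z i) = L ⟨Z i, hmem⟩ := L.extend_apply ⟨Z i, hmem⟩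
  rw [h2]
  show Lmap ⟨Z i, hmem⟩ = W i
  have h3 : (⟨Z i, hmem⟩ : LinearMap.range P) =
      ⟨P (Pi.single i 1), LinearMap.mem_range_self P _⟩ :=
    Subtype.ext (combo_single Z i).symm
  rw [h3, hLmap, hQ]
  exact combo_single W i

/-! ### Householder reflections -/

private lemma householder_det {N : ℕ} (v : Fin N → ℝ) (hv : ∑ m, v m * v m = 1) :
    ((1 : Matrix (Fin N) (Fin N) ℝ) - (2:ℝ) • vecMulVec v v).det = -1 := by
  have heq : (1 : Matrix (Fin N) (Fin N) ℝ) - (2:ℝ) • vecMulVec v v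
      = 1 + replicateCol (Fin 1) (fun i => (-2:ℝ) * v i) * replicateRow (Fin 1) v := by
    ext i j
    simp [Matrix.mul_apply, Matrix.replicateCol, Matrix.replicateRow, vecMulVec_apply, Matrix.one_apply,
      sub_eq_add_neg]
    ring
  rw [heq]; erw [det_one_add_replicateCol_mul_replicateRow]
  have h2 : (v ⬝ᵥ fun i => (-2:ℝ) * v i) = -2 * ∑ m, v m * v m := by
    simp only [dotProduct]
    rw [Finset.mul_sum]; exact Finset.sum_congr rfl fun i _ => by ring
  rw [h2, hv]; ring

private lemma householder_symm {N : ℕ} (v : Fin N → ℝ) :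
    ((1 : Matrix (Fin N) (Fin N) ℝ) - (2:ℝ) • vecMulVec v v)ᵀ
      = (1 : Matrix (Fin N) (Fin N) ℝ) - (2:ℝ) • vecMulVec v v := by
  ext i j
  simp only [Matrix.transpose_apply, Matrix.sub_apply, Matrix.smul_apply, vecMulVec_apply,
    Matrix.one_apply, smul_eq_mul]
  rcases eq_or_ne i j with h | h
  · subst h; ring
  · simp [h, Ne.symm h]; ring

private lemma householder_mul_self {N : ℕ} (v : Fin N → ℝ) (hv : ∑ m, v m * v m = 1) :
    ((1 : Matrix (Fin N) (Fin N) ℝ) - (2:ℝ) • vecMulVec v v) *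
      ((1 : Matrix (Fin N) (Fin N) ℝ) - (2:ℝ) • vecMulVec v v) = 1 := by
  have hVV : vecMulVec v v * vecMulVec v v = vecMulVec v v := by
    ext i j
    simp only [Matrix.mul_apply, vecMulVec_apply]
    have h3 : ∑ m, v i * v m * (v m * v j) = (v i * v j) * ∑ m, v m * v m := by
      rw [Finset.mul_sum]; exact Finset.sum_congr rfl fun m _ => by ring
    rw [h3, hv, mul_one]
  simp only [Matrix.sub_mul, Matrix.mul_sub, Matrix.smul_mul, Matrix.mul_smul,
    Matrix.one_mul, Matrix.mul_one, hVV, smul_smul]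
  module

private lemma householder_mulVec {N : ℕ} (v w : Fin N → ℝ) (hvw : ∑ m, v m * w m = 0) :
    ((1 : Matrix (Fin N) (Fin N) ℝ) - (2:ℝ) • vecMulVec v v) *ᵥ w = w := by
  funext i
  simp only [Matrix.sub_mulVec, Matrix.smul_mulVec, Matrix.one_mulVec, Pi.sub_apply,
    Pi.smul_apply, smul_eq_mul]
  have h4 : (vecMulVec v v *ᵥ w) i = v i * ∑ m, v m * w m := by
    simp only [Matrix.mulVec, dotProduct, vecMulVec_apply]
    rw [Finset.mul_sum]; exact Finset.sum_congr rfl fun m _ => by ring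
  rw [h4, hvw]
  ring

end DQAux

end AuxDQ

noncomputable section Aux2DQ
namespace DQAux2

open Matrix Module Finset DQAux

variable {d k : ℕ}

/-- The invariant map: first coordinates and the Gram matrix of the "tails". -/
def phiMap (d k : ℕ) (hd : 4 ≤ d) (x : DiscProd d k) :
    (Fin k → ℝ) × Matrix (Fin k) (Fin k) ℝ :=
  (fun i => x.1 i ⟨0, by omega⟩,
    Matrix.of fun i j => (inner ℝ (x.1 i) (x.1 j) : ℝ)
      - x.1 i ⟨0, by omega⟩ * x.1 j ⟨0, by omega⟩)

lemma first_coord_invariant (hd : 4 ≤ d)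
    {A : Matrix (Fin (d-1)) (Fin (d-1)) ℝ} (hF : FixesFirst A)
    (u : EuclideanSpace ℝ (Fin (d-1))) :
    Matrix.toEuclideanLin A u ⟨0, by omega⟩ = u ⟨0, by omega⟩ := by
  rw [toEuc_apply]
  rw [Finset.sum_eq_single (⟨0, by omega⟩ : Fin (d-1))]
  · rw [hF.2 _ _ rfl]; simp
  · intro m _ hm
    rw [hF.2 _ _ rfl]
    have hm' : (m : ℕ) ≠ 0 := fun h => hm (Fin.ext h)
    simp [hm']
  · simp

lemma inner_invariant {A : Matrix (Fin (d-1)) (Fin (d-1)) ℝ} (hA : IsSOMat A)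
    (u w : EuclideanSpace ℝ (Fin (d-1))) :
    (inner ℝ (Matrix.toEuclideanLin A u) (Matrix.toEuclideanLin A w) : ℝ) = inner ℝ u w := by
  have hAtA : Aᵀ * A = 1 := mul_eq_one_comm.mp hA.1
  rw [euc_inner_eq, euc_inner_eq]
  have h1 : ∀ (z : EuclideanSpace ℝ (Fin (d-1))) j,
      Matrix.toEuclideanLin A z j = (A *ᵥ (fun m => z m)) j := by
    intro z j; rw [toEuc_apply]; simp [Matrix.mulVec, dotProduct]
  have key : (A *ᵥ (fun m => u m)) ⬝ᵥ (A *ᵥ (fun m => w m))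
      = (fun m => u m) ⬝ᵥ (fun m => w m) := by
    rw [dotProduct_mulVec, ← Matrix.vecMul_transpose, Matrix.vecMul_vecMul, hAtA,
      Matrix.vecMul_one]
  calc ∑ m, Matrix.toEuclideanLin A u m * Matrix.toEuclideanLin A w m
      = (A *ᵥ (fun m => u m)) ⬝ᵥ (A *ᵥ (fun m => w m)) :=
        Finset.sum_congr rfl fun m _ => by rw [h1, h1]
    _ = (fun m => u m) ⬝ᵥ (fun m => w m) := key
    _ = ∑ m, u m * w m := rfl

lemma phiMap_invariant (hd : 4 ≤ d) {x y : DiscProd d k} (hxy : discRel d k x y) :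
    phiMap d k hd y = phiMap d k hd x := by
  obtain ⟨A, hA, hF, hrel⟩ := hxy
  unfold phiMap
  refine Prod.ext (funext fun i => ?_) ?_
  · show (y.1 i) ⟨0, by omega⟩ = (x.1 i) ⟨0, by omega⟩
    rw [hrel i, first_coord_invariant hd hF]
  · ext i j
    simp only [Matrix.of_apply]
    rw [hrel i, hrel j, first_coord_invariant hd hF, first_coord_invariant hd hF,
      inner_invariant hA]

lemma fixesFirst_of (hd : 4 ≤ d) (B : Matrix (Fin (d-1)) (Fin (d-1)) ℝ)
    (hB : B * Bᵀ = 1)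
    (he : Matrix.toEuclideanLin B (EuclideanSpace.single ⟨0, by omega⟩ (1:ℝ))
      = EuclideanSpace.single ⟨0, by omega⟩ (1:ℝ)) : FixesFirst B := by
  have hz : (0:ℕ) < d - 1 := by omega
  set z0 : Fin (d-1) := ⟨0, hz⟩ with hz0
  have hcol : ∀ j, B j z0 = if (j:ℕ) = 0 then 1 else 0 := by
    intro j
    have h1 : Matrix.toEuclideanLin B (EuclideanSpace.single z0 (1:ℝ)) j
        = EuclideanSpace.single z0 (1:ℝ) j := by rw [he]
    rw [toEuc_apply] at h1
    rw [Finset.sum_eq_single z0 (fun m _ hm => by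
        simp [EuclideanSpace.single_apply, hm]) (by simp)] at h1
    simp only [EuclideanSpace.single_apply] at h1
    norm_num at h1
    rw [h1]
    by_cases hj : j = z0
    · subst hj; simp [hz0]
    · have hj' : (j:ℕ) ≠ 0 := fun h => hj (Fin.ext h)
      simp [hj, hj']
  have hrow0 : ∑ m, B z0 m * B z0 m = 1 := by
    have h2 : (B * Bᵀ) z0 z0 = (1 : Matrix (Fin (d-1)) (Fin (d-1)) ℝ) z0 z0 := by rw [hB]
    rw [Matrix.mul_apply] at h2
    simp only [Matrix.transpose_apply, Matrix.one_apply_eq] at h2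
    exact h2
  have hB00 : B z0 z0 = 1 := by rw [hcol z0]; simp [hz0]
  have hzero : ∀ m, m ≠ z0 → B z0 m = 0 := by
    intro m hm
    have hsplit : B z0 z0 * B z0 z0 + ∑ m ∈ univ.erase z0, B z0 m * B z0 m = 1 := by
      rw [Finset.add_sum_erase univ (fun m => B z0 m * B z0 m) (mem_univ z0)]; exact hrow0
    rw [hB00, one_mul] at hsplit
    have hze : ∑ m ∈ univ.erase z0, B z0 m * B z0 m = 0 := by linarith
    have h3 := (Finset.sum_eq_zero_iff_of_nonneg
      (fun m _ => mul_self_nonneg (B z0 m))).mp hze m (by simp [hm])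
    exact mul_self_eq_zero.mp h3
  constructor
  · intro j kk hkk
    have hkz : kk = z0 := Fin.ext hkk
    subst hkz
    exact hcol j
  · intro j kk hj
    have hjz : j = z0 := Fin.ext hj
    subst hjz
    by_cases hkz : kk = z0
    · subst hkz; simp [hB00, show (z0:ℕ) = 0 from rfl]
    · have : (kk:ℕ) ≠ 0 := fun h => hkz (Fin.ext h)
      simp [this, hzero kk hkz]

lemma discRel_of_phiMap_eq (hd : 4 ≤ d) (hkd : k < d - 2) {x y : DiscProd d k}
    (hphi : phiMap d k hd x = phiMap d k hd y) : discRel d k x y := by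
  have hz : (0:ℕ) < d - 1 := by omega
  set z0 : Fin (d-1) := ⟨0, hz⟩ with hz0
  have hfst : ∀ i, x.1 i z0 = y.1 i z0 := by
    intro i
    have := congrArg Prod.fst hphi
    exact congrFun this i
  have hinner : ∀ i j, (inner ℝ (x.1 i) (x.1 j) : ℝ) = inner ℝ (y.1 i) (y.1 j) := by
    intro i j
    have h1 : (phiMap d k hd x).2 i j = (phiMap d k hd y).2 i j := by rw [hphi]
    have h1' : (inner ℝ (x.1 i) (x.1 j) : ℝ) - x.1 i z0 * x.1 j z0
        = (inner ℝ (y.1 i) (y.1 j) : ℝ) - y.1 i z0 * y.1 j z0 := h1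
    have h2 := hfst i
    have h3 := hfst j
    have h4 : x.1 i z0 * x.1 j z0 = y.1 i z0 * y.1 j z0 := by rw [h2, h3]
    linarith [h1', h4]
  set e0 : EuclideanSpace ℝ (Fin (d-1)) := EuclideanSpace.single z0 1 with he0
  set Z : Fin (k+1) → EuclideanSpace ℝ (Fin (d-1)) := Fin.cons e0 x.1 with hZ
  set W : Fin (k+1) → EuclideanSpace ℝ (Fin (d-1)) := Fin.cons e0 y.1 with hW
  have hZW : ∀ i j, (inner ℝ (Z i) (Z j) : ℝ) = inner ℝ (W i) (W j) := by
    intro i j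
    refine Fin.cases ?_ ?_ i
    · refine Fin.cases ?_ ?_ j
      · simp [hZ, hW]
      · intro jj
        simp only [hZ, hW, Fin.cons_zero, Fin.cons_succ, he0,
          EuclideanSpace.inner_single_left]
        simp [hfst jj]
    · intro ii
      refine Fin.cases ?_ ?_ j
      · simp only [hZ, hW, Fin.cons_zero, Fin.cons_succ, he0,
          EuclideanSpace.inner_single_right]
        simp [hfst ii]
      · intro jj
        simp only [hZ, hW, Fin.cons_succ]
        exact hinner ii jj
  obtain ⟨F, hFZ⟩ := exists_isometry Z W hZW
  set A₀ : Matrix (Fin (d-1)) (Fin (d-1)) ℝ := Matrix.toEuclideanLin.symm F.toLinearMap with hA₀def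
  have hA₀ : Matrix.toEuclideanLin A₀ = F.toLinearMap :=
    Matrix.toEuclideanLin.apply_symm_apply F.toLinearMap
  have hA₀app : ∀ u, Matrix.toEuclideanLin A₀ u = F u := fun u => by rw [hA₀]; rfl
  have hsingle : ∀ (l m : Fin (d-1)),
      A₀ m l = F (EuclideanSpace.single l (1:ℝ)) m := by
    intro l m
    have h4 : Matrix.toEuclideanLin A₀ (EuclideanSpace.single l (1:ℝ)) m
        = F (EuclideanSpace.single l (1:ℝ)) m := by rw [hA₀app]
    rw [toEuc_apply] at h4
    rw [Finset.sum_eq_single l (fun mm _ hmm => by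
      simp [EuclideanSpace.single_apply, hmm]) (by simp)] at h4
    simpa [EuclideanSpace.single_apply] using h4
  have horth : A₀ᵀ * A₀ = 1 := by
    ext i j
    rw [Matrix.mul_apply]
    simp only [Matrix.transpose_apply]
    have h5 : (inner ℝ (F (EuclideanSpace.single i (1:ℝ)))
        (F (EuclideanSpace.single j (1:ℝ))) : ℝ)
        = inner ℝ (EuclideanSpace.single i (1:ℝ)) (EuclideanSpace.single j (1:ℝ)) :=
      F.inner_map_map _ _
    rw [euc_inner_eq] at h5
    calc ∑ m, A₀ m i * A₀ m j
        = ∑ m, F (EuclideanSpace.single i (1:ℝ)) m * F (EuclideanSpace.single j (1:ℝ)) m :=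
          Finset.sum_congr rfl fun m _ => by rw [hsingle, hsingle]
      _ = (inner ℝ (EuclideanSpace.single i (1:ℝ)) (EuclideanSpace.single j (1:ℝ)) : ℝ) := h5
      _ = (1 : Matrix (Fin (d-1)) (Fin (d-1)) ℝ) i j := by
          rw [EuclideanSpace.inner_single_left]
          simp [EuclideanSpace.single_apply, Matrix.one_apply, eq_comm]
  have hdet : A₀.det = 1 ∨ A₀.det = -1 := by
    have h6 := congrArg Matrix.det horth
    rw [Matrix.det_mul, Matrix.det_transpose, Matrix.det_one] at h6
    exact mul_self_eq_one_iff.mp h6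
  -- a unit vector orthogonal to everything in sight
  classical
  set T : Submodule ℝ (EuclideanSpace ℝ (Fin (d-1))) := Submodule.span ℝ (Set.range W) with hT
  have hrank : finrank ℝ T ≤ k + 1 := by
    have h7 := finrank_span_le_card (R := ℝ) (Set.range W)
    refine h7.trans ?_
    rw [Set.toFinset_range]
    exact (Finset.card_image_le).trans (by simp)
  have hTne : T ≠ ⊤ := by
    intro h8
    have h9 : finrank ℝ T = d - 1 := by
      rw [h8, finrank_top]
      exact finrank_euclideanSpace_fin
    omega
  have hbot : Tᗮ ≠ ⊥ := by
    rw [Ne, Submodule.orthogonal_eq_bot_iff]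
    exact hTne
  obtain ⟨v₀, hv₀T, hv₀ne⟩ := (Submodule.ne_bot_iff _).mp hbot
  set v : EuclideanSpace ℝ (Fin (d-1)) := ‖v₀‖⁻¹ • v₀ with hv
  have hvT : v ∈ Tᗮ := Submodule.smul_mem _ _ hv₀T
  have hv1 : ‖v‖ = 1 := norm_smul_inv_norm hv₀ne
  have hvv : ∑ m, v m * v m = 1 := by
    have h10 : (inner ℝ v v : ℝ) = ‖v‖ * ‖v‖ := real_inner_self_eq_norm_mul_norm v
    rw [euc_inner_eq] at h10
    rw [h10, hv1, one_mul]
  have hvW : ∀ i, ∑ m, v m * W i m = 0 := by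
    intro i
    have h11 : (inner ℝ (W i) v : ℝ) = 0 :=
      (Submodule.mem_orthogonal T v).mp hvT (W i)
        (Submodule.subset_span (Set.mem_range_self i))
    rw [real_inner_comm, euc_inner_eq] at h11
    exact h11
  set M : Matrix (Fin (d-1)) (Fin (d-1)) ℝ :=
    (1 : Matrix (Fin (d-1)) (Fin (d-1)) ℝ) - (2:ℝ) • vecMulVec (fun m => v m) (fun m => v m)
    with hM
  have hMW : ∀ i, Matrix.toEuclideanLin M (W i) = W i := by
    intro i
    ext j
    rw [toEuc_apply]
    have h12 : (M *ᵥ (fun m => W i m)) j = W i j := by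
      rw [hM, householder_mulVec _ _ (hvW i)]
    rw [← h12]
    simp [Matrix.mulVec, dotProduct]
  have hFe0 : F e0 = e0 := by
    have := hFZ 0
    rwa [hZ, hW, Fin.cons_zero, Fin.cons_zero] at this
  have hFx : ∀ i, F (x.1 i) = y.1 i := by
    intro i
    have := hFZ i.succ
    rwa [hZ, hW, Fin.cons_succ, Fin.cons_succ] at this
  have he0W : e0 = W 0 := by rw [hW, Fin.cons_zero]
  rcases hdet with hdet1 | hdetm1
  · refine ⟨A₀, ⟨mul_eq_one_comm.mp horth, hdet1⟩, ?_, ?_⟩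
    · refine fixesFirst_of hd A₀ (mul_eq_one_comm.mp horth) ?_
      rw [hA₀app]
      exact hFe0
    · intro i
      rw [hA₀app]
      exact (hFx i).symm
  · refine ⟨M * A₀, ⟨?_, ?_⟩, ?_, ?_⟩
    · have horthA : (M * A₀)ᵀ * (M * A₀) = 1 := by
        rw [Matrix.transpose_mul]
        calc A₀ᵀ * Mᵀ * (M * A₀) = A₀ᵀ * (Mᵀ * M * A₀) := by
              rw [Matrix.mul_assoc A₀ᵀ Mᵀ (M * A₀), ← Matrix.mul_assoc Mᵀ M A₀]
          _ = 1 := by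
              rw [hM, householder_symm, householder_mul_self _ hvv, Matrix.one_mul]
              exact horth
      exact mul_eq_one_comm.mp horthA
    · rw [Matrix.det_mul, hM, householder_det _ hvv, hdetm1]
      norm_num
    · refine fixesFirst_of hd (M * A₀) ?_ ?_
      · have horthA : (M * A₀)ᵀ * (M * A₀) = 1 := by
          rw [Matrix.transpose_mul]
          calc A₀ᵀ * Mᵀ * (M * A₀) = A₀ᵀ * (Mᵀ * M * A₀) := by
                rw [Matrix.mul_assoc A₀ᵀ Mᵀ (M * A₀), ← Matrix.mul_assoc Mᵀ M A₀]
            _ = 1 := by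
                rw [hM, householder_symm, householder_mul_self _ hvv, Matrix.one_mul]
                exact horth
        exact mul_eq_one_comm.mp horthA
      · rw [toEuc_mul, hA₀app, hFe0, he0W, hMW 0, ← he0W]
    · intro i
      rw [toEuc_mul, hA₀app, hFx i]
      have := hMW i.succ
      rw [hW, Fin.cons_succ] at this
      rw [this]

end DQAux2

end Aux2DQ

noncomputable section Aux3DQ
namespace DQAux3

open Matrix Module Finset DQAux DQAux2

variable {d k : ℕ}

lemma phiMap_diag (hd : 4 ≤ d) (x : DiscProd d k) (i : Fin k) :
    ((phiMap d k hd x).1 i)^2 + (phiMap d k hd x).2 i i = ‖x.1 i‖^2 := by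
  have h1 : (phiMap d k hd x).2 i i
      = (inner ℝ (x.1 i) (x.1 i) : ℝ) - x.1 i ⟨0, by omega⟩ * x.1 i ⟨0, by omega⟩ := rfl
  have h2 : (inner ℝ (x.1 i) (x.1 i) : ℝ) = ‖x.1 i‖^2 := real_inner_self_eq_norm_sq (x.1 i)
  have h3 : (phiMap d k hd x).1 i = x.1 i ⟨0, by omega⟩ := rfl
  rw [h1, h2, h3]
  ring

lemma phiMap_symm (hd : 4 ≤ d) (x : DiscProd d k) :
    ((phiMap d k hd x).2)ᵀ = (phiMap d k hd x).2 := by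
  ext i j
  show (phiMap d k hd x).2 j i = (phiMap d k hd x).2 i j
  have h1 : ∀ a b, (phiMap d k hd x).2 a b
      = (inner ℝ (x.1 a) (x.1 b) : ℝ) - x.1 a ⟨0, by omega⟩ * x.1 b ⟨0, by omega⟩ := fun a b => rfl
  rw [h1, h1, real_inner_comm]
  ring

lemma phiMap_psd (hd : 4 ≤ d) (x : DiscProd d k) (c : Fin k → ℝ) :
    0 ≤ c ⬝ᵥ ((phiMap d k hd x).2 *ᵥ c) := by
  have hz : (0:ℕ) < d - 1 := by omega
  set z0 : Fin (d-1) := ⟨0, hz⟩ with hz0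
  set u : Fin k → EuclideanSpace ℝ (Fin (d-1)) :=
    fun i => WithLp.toLp 2 (fun m => if (m:ℕ) = 0 then 0 else x.1 i m) with hu
  have hGu : ∀ i j, (phiMap d k hd x).2 i j = (inner ℝ (u i) (u j) : ℝ) := by
    intro i j
    have h1 : (phiMap d k hd x).2 i j
        = (inner ℝ (x.1 i) (x.1 j) : ℝ) - x.1 i z0 * x.1 j z0 := rfl
    rw [h1, euc_inner_eq, euc_inner_eq]
    have hx : ∑ m, x.1 i m * x.1 j m
        = x.1 i z0 * x.1 j z0 + ∑ m ∈ univ.erase z0, x.1 i m * x.1 j m := by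
      rw [Finset.add_sum_erase univ (fun m => x.1 i m * x.1 j m) (mem_univ z0)]
    have hux : ∑ m, u i m * u j m
        = u i z0 * u j z0 + ∑ m ∈ univ.erase z0, u i m * u j m := by
      rw [Finset.add_sum_erase univ (fun m => u i m * u j m) (mem_univ z0)]
    have huz : u i z0 * u j z0 = 0 := by simp [hu, show (z0:ℕ) = 0 from rfl]
    have hsame : ∑ m ∈ univ.erase z0, u i m * u j m
        = ∑ m ∈ univ.erase z0, x.1 i m * x.1 j m := by
      refine Finset.sum_congr rfl fun m hm => ?_
      have hm' : (m:ℕ) ≠ 0 := by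
        intro h
        exact (Finset.mem_erase.mp hm).1 (Fin.ext h)
      simp [hu, hm']
    rw [hux, huz, zero_add, hsame, hx]
    ring
  have hquad : c ⬝ᵥ ((phiMap d k hd x).2 *ᵥ c) = (inner ℝ (combo u c) (combo u c) : ℝ) := by
    have hrhs : (inner ℝ (combo u c) (combo u c) : ℝ)
        = ∑ i, ∑ j, c i * c j * (inner ℝ (u i) (u j) : ℝ) := by
      simp only [combo, LinearMap.coe_mk, AddHom.coe_mk, sum_inner, inner_sum,
        real_inner_smul_left, real_inner_smul_right]
      exact Finset.sum_congr rfl fun i _ => Finset.sum_congr rfl fun j _ => by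
        rw [real_inner_comm (u j) (u i)]; ring
    rw [hrhs]
    simp only [dotProduct, Matrix.mulVec, Finset.mul_sum]
    refine Finset.sum_congr rfl fun i _ => Finset.sum_congr rfl fun j _ => ?_
    rw [hGu i j]
    show c i * ((fun j => (inner ℝ (u i) (u j) : ℝ)) j * c j) = c i * c j * inner ℝ (u i) (u j)
    ring
  rw [hquad]
  exact real_inner_self_nonneg

lemma exists_realization (hd : 4 ≤ d) (hkd : k < d - 2)
    (a : Fin k → ℝ) (G : Matrix (Fin k) (Fin k) ℝ)
    (hsymm : Gᵀ = G) (hpsd : ∀ c : Fin k → ℝ, 0 ≤ c ⬝ᵥ (G *ᵥ c))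
    (hbnd : ∀ i, (a i)^2 + G i i ≤ 1) :
    ∃ x : DiscProd d k, phiMap d k hd x = (a, G) := by
  classical
  have hz : (0:ℕ) < d - 1 := by omega
  set z0 : Fin (d-1) := ⟨0, hz⟩ with hz0
  have hps : G.PosSemidef := by
    refine posSemidef_iff_dotProduct_mulVec.mpr ⟨?_, ?_⟩
    · show Gᴴ = G
      ext i j
      rw [Matrix.conjTranspose_apply, star_trivial]
      exact congrFun (congrFun hsymm i) j
    · intro c
      have : star c = c := funext fun i => star_trivial _
      rw [this]
      exact hpsd c
  obtain ⟨B₀, hB₀⟩ : ∃ B : Matrix (Fin k) (Fin k) ℝ, G = star B * B := by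
    open scoped MatrixOrder in exact CStarAlgebra.nonneg_iff_eq_star_mul_self.mp hps.nonneg
  have hB : G = B₀ᵀ * B₀ := by
    rw [hB₀]
    congr 1
  have hk1 : ∀ (l : Fin k), (l : ℕ) + 1 < d - 1 := fun l => by have := l.2; omega
  set e : Fin k → Fin (d-1) := fun l => ⟨(l:ℕ)+1, hk1 l⟩ with he
  have heinj : Function.Injective e := by
    intro l l' h
    have : (l:ℕ) + 1 = (l':ℕ) + 1 := congrArg Fin.val h
    exact Fin.ext (by omega)
  set xv : Fin k → EuclideanSpace ℝ (Fin (d-1)) := fun i =>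
    WithLp.toLp 2 (fun m => if (m:ℕ) = 0 then a i else
      if hm : (m:ℕ) - 1 < k then B₀ ⟨(m:ℕ)-1, hm⟩ i else 0) with hxv
  have hxz : ∀ i, xv i z0 = a i := fun i => by simp [hxv, show (z0:ℕ) = 0 from rfl]
  have hxe : ∀ i l, xv i (e l) = B₀ l i := by
    intro i l
    have h1 : ((e l : Fin (d-1)) : ℕ) = (l:ℕ) + 1 := rfl
    simp only [hxv]
    rw [if_neg (by omega)]
    rw [dif_pos (by omega : ((e l : Fin (d-1)) : ℕ) - 1 < k)]
    congr 1
  have hinner : ∀ i j, (inner ℝ (xv i) (xv j) : ℝ) = a i * a j + G i j := by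
    intro i j
    rw [euc_inner_eq]
    set S : Finset (Fin (d-1)) := insert z0 (Finset.image e univ) with hS
    have hz0ni : z0 ∉ Finset.image e univ := by
      intro h
      obtain ⟨l, _, hl⟩ := Finset.mem_image.mp h
      have : (l:ℕ) + 1 = 0 := congrArg Fin.val hl
      omega
    have hsub : ∑ m ∈ S, xv i m * xv j m = ∑ m, xv i m * xv j m := by
      refine Finset.sum_subset (Finset.subset_univ S) fun m _ hm => ?_
      have hm0 : (m:ℕ) ≠ 0 := by
        intro h
        apply hm
        rw [hS]
        have hmz : m = z0 := Fin.ext h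
        rw [hmz]
        exact Finset.mem_insert_self _ _
      have hmk : ¬ ((m:ℕ) - 1 < k) := by
        intro h
        apply hm
        rw [hS]
        refine Finset.mem_insert_of_mem (Finset.mem_image.mpr ⟨⟨(m:ℕ)-1, h⟩, mem_univ _, ?_⟩)
        exact Fin.ext (by simp [he]; omega)
      have : xv i m = 0 := by simp [hxv, hm0, hmk]
      rw [this, zero_mul]
    rw [← hsub, hS, Finset.sum_insert hz0ni, Finset.sum_image (fun l _ l' _ h => heinj h)]
    have h2 : ∑ l, xv i (e l) * xv j (e l) = (B₀ᵀ * B₀) i j := by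
      rw [Matrix.mul_apply]
      exact Finset.sum_congr rfl fun l _ => by rw [hxe, hxe, Matrix.transpose_apply]
    rw [h2, ← hB, hxz, hxz]
  have hnorm : ∀ i, ‖xv i‖ ≤ 1 := by
    intro i
    have h3 : ‖xv i‖^2 = a i^2 + G i i := by
      rw [← real_inner_self_eq_norm_sq, hinner]
      ring
    nlinarith [norm_nonneg (xv i), hbnd i, h3]
  refine ⟨⟨xv, hnorm⟩, ?_⟩
  unfold phiMap
  refine Prod.ext (funext fun i => hxz i) ?_
  ext i j
  show (inner ℝ (xv i) (xv j) : ℝ) - xv i ⟨0, by omega⟩ * xv j ⟨0, by omega⟩ = G i j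
  have h4 : xv i (⟨0, by omega⟩ : Fin (d-1)) = a i := hxz i
  have h5 : xv j (⟨0, by omega⟩ : Fin (d-1)) = a j := hxz j
  rw [hinner, h4, h5]
  ring

end DQAux3

end Aux3DQ

noncomputable section Aux4DQ
namespace DQAux4

open Matrix Finset DQAux DQAux2 DQAux3 unitInterval

variable {d k : ℕ}

/-- The target convex region. -/
def Cset (d k : ℕ) : Set ((Fin k → ℝ) × Matrix (Fin k) (Fin k) ℝ) :=
  {p | p.2ᵀ = p.2 ∧ (∀ c, 0 ≤ c ⬝ᵥ (p.2 *ᵥ c)) ∧ ∀ i, (p.1 i)^2 + p.2 i i ≤ 1}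

def PhiQ (d k : ℕ) (hd : 4 ≤ d) : DiscQuot d k → (Fin k → ℝ) × Matrix (Fin k) (Fin k) ℝ :=
  Quot.lift (phiMap d k hd) (fun _ _ hxy => (phiMap_invariant hd hxy).symm)

lemma PhiQ_mk (hd : 4 ≤ d) (x : DiscProd d k) :
    PhiQ d k hd (Quot.mk _ x) = phiMap d k hd x := rfl

lemma PhiQ_inj (hd : 4 ≤ d) (hkd : k < d - 2) : Function.Injective (PhiQ d k hd) := by
  intro q1 q2
  induction q1 using Quot.ind with | _ x =>
  induction q2 using Quot.ind with | _ y =>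
  intro h
  exact Quot.sound (discRel_of_phiMap_eq hd hkd h)

lemma PhiQ_mem_Cset (hd : 4 ≤ d) (q : DiscQuot d k) : PhiQ d k hd q ∈ Cset d k := by
  induction q using Quot.ind with | _ x =>
  refine ⟨phiMap_symm hd x, phiMap_psd hd x, fun i => ?_⟩
  rw [PhiQ_mk, phiMap_diag hd x i]
  have h1 := x.2 i
  nlinarith [norm_nonneg (x.1 i)]

lemma PhiQ_continuous (hd : 4 ≤ d) : Continuous (PhiQ d k hd) := by
  refine continuous_quot_lift _ ?_
  have heval : ∀ (m : Fin (d-1)),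
      Continuous fun u : EuclideanSpace ℝ (Fin (d-1)) => u m := fun m =>
    (continuous_apply m).comp (PiLp.continuous_ofLp 2 _)
  have hcoord : ∀ i, Continuous fun x : DiscProd d k => x.1 i :=
    fun i => (continuous_apply i).comp continuous_subtype_val
  refine Continuous.prodMk ?_ ?_
  · exact continuous_pi fun i => (heval _).comp (hcoord i)
  · refine continuous_matrix fun i j => ?_
    refine Continuous.sub ?_ ?_
    · exact Continuous.inner (hcoord i) (hcoord j)
    · exact ((heval _).comp (hcoord i)).mul ((heval _).comp (hcoord j))

lemma compactSpace_discProd (d k : ℕ) : CompactSpace (DiscProd d k) := by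
  have h1 : {x : Fin k → EuclideanSpace ℝ (Fin (d-1)) | ∀ i, ‖x i‖ ≤ 1}
      = Set.pi Set.univ (fun _ => Metric.closedBall 0 1) := by
    ext x
    simp [Set.mem_pi, mem_closedBall_zero_iff]
  refine isCompact_iff_compactSpace.mp ?_
  show IsCompact {x : Fin k → EuclideanSpace ℝ (Fin (d-1)) | ∀ i, ‖x i‖ ≤ 1}
  rw [h1]
  exact isCompact_univ_pi fun _ => isCompact_closedBall _ _

lemma compactSpace_discQuot (d k : ℕ) : CompactSpace (DiscQuot d k) := by
  haveI := compactSpace_discProd d k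
  constructor
  have h1 : Set.range (Quot.mk (discRel d k)) = Set.univ :=
    Set.range_eq_univ.mpr (Quot.mk_surjective)
  rw [← h1]
  exact isCompact_range continuous_quot_mk

lemma PhiQ_surj (hd : 4 ≤ d) (hkd : k < d - 2) (p : (Fin k → ℝ) × Matrix (Fin k) (Fin k) ℝ)
    (hp : p ∈ Cset d k) : ∃ q : DiscQuot d k, PhiQ d k hd q = p := by
  obtain ⟨hsymm, hpsd, hbnd⟩ := hp
  obtain ⟨x, hx⟩ := exists_realization hd hkd p.1 p.2 hsymm hpsd hbnd
  exact ⟨Quot.mk _ x, hx⟩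

lemma mem_boundary_iff (hd : 4 ≤ d) (q : DiscQuot d k) :
    q ∈ discQuotBoundary d k ↔
      ∃ i, ((PhiQ d k hd q).1 i)^2 + (PhiQ d k hd q).2 i i = 1 := by
  constructor
  · rintro ⟨x, ⟨i, hi⟩, rfl⟩
    refine ⟨i, ?_⟩
    rw [PhiQ_mk, phiMap_diag hd x i, hi]
    norm_num
  · induction q using Quot.ind with | _ x =>
    rintro ⟨i, hi⟩
    refine ⟨x, ⟨i, ?_⟩, rfl⟩
    rw [PhiQ_mk, phiMap_diag hd x i] at hi
    have h2 : (‖x.1 i‖ - 1) * (‖x.1 i‖ + 1) = 0 := by nlinarith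
    rcases mul_eq_zero.mp h2 with h3 | h3
    · linarith
    · nlinarith [norm_nonneg (x.1 i)]

/-- The minimal slack. -/
def mfun (d k : ℕ) (hk : 1 ≤ k) (p : ↥(Cset d k)) : ℝ :=
  Finset.univ.inf' ⟨⟨0, by omega⟩, mem_univ _⟩
    (fun i => 1 - ((p.1.1 i)^2 + p.1.2 i i))

lemma mfun_nonneg (hk : 1 ≤ k) (p : ↥(Cset d k)) : 0 ≤ mfun d k hk p := by
  refine Finset.le_inf' _ _ fun i _ => ?_
  have := p.2.2.2 i
  linarith

lemma mfun_le (hk : 1 ≤ k) (p : ↥(Cset d k)) (i : Fin k) :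
    mfun d k hk p ≤ 1 - ((p.1.1 i)^2 + p.1.2 i i) :=
  Finset.inf'_le _ (mem_univ i)

lemma mfun_exists (hk : 1 ≤ k) (p : ↥(Cset d k)) :
    ∃ i, mfun d k hk p = 1 - ((p.1.1 i)^2 + p.1.2 i i) := by
  obtain ⟨i, _, hi⟩ := Finset.exists_mem_eq_inf' (⟨⟨0, by omega⟩, mem_univ _⟩ :
    (Finset.univ : Finset (Fin k)).Nonempty) (fun i => 1 - ((p.1.1 i)^2 + p.1.2 i i))
  exact ⟨i, hi⟩

lemma mfun_continuous (hk : 1 ≤ k) : Continuous (mfun d k hk) := by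
  refine Continuous.finset_inf'_apply _ fun i _ => ?_
  refine Continuous.sub continuous_const ?_
  refine Continuous.add ?_ ?_
  · exact ((continuous_apply i).comp (continuous_fst.comp continuous_subtype_val)).pow 2
  · exact Continuous.matrix_elem (continuous_snd.comp continuous_subtype_val) i i

/-- The deformation, in coordinates. -/
def moveFun (d k : ℕ) (hk : 1 ≤ k) (p : ↥(Cset d k)) (t : ℝ) :
    (Fin k → ℝ) × Matrix (Fin k) (Fin k) ℝ :=
  (p.1.1, p.1.2 + (t * mfun d k hk p) • (1 : Matrix (Fin k) (Fin k) ℝ))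

lemma moveFun_diag (hk : 1 ≤ k) (p : ↥(Cset d k)) (t : ℝ) (i : Fin k) :
    ((moveFun d k hk p t).1 i)^2 + (moveFun d k hk p t).2 i i
      = (p.1.1 i)^2 + p.1.2 i i + t * mfun d k hk p := by
  simp only [moveFun, Matrix.add_apply, Matrix.smul_apply, Matrix.one_apply_eq, smul_eq_mul]
  ring

lemma moveFun_mem (hk : 1 ≤ k) (p : ↥(Cset d k)) (t : ℝ) (ht0 : 0 ≤ t) (ht1 : t ≤ 1) :
    moveFun d k hk p t ∈ Cset d k := by
  obtain ⟨hsymm, hpsd, hbnd⟩ := p.2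
  have hm0 := mfun_nonneg hk p
  have htm : 0 ≤ t * mfun d k hk p := mul_nonneg ht0 hm0
  refine ⟨?_, ?_, ?_⟩
  · show (p.1.2 + (t * mfun d k hk p) • (1 : Matrix (Fin k) (Fin k) ℝ))ᵀ
        = p.1.2 + (t * mfun d k hk p) • (1 : Matrix (Fin k) (Fin k) ℝ)
    rw [Matrix.transpose_add, Matrix.transpose_smul, Matrix.transpose_one, hsymm]
  · intro c
    show 0 ≤ c ⬝ᵥ ((p.1.2 + (t * mfun d k hk p) • (1 : Matrix (Fin k) (Fin k) ℝ)) *ᵥ c)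
    rw [Matrix.add_mulVec, dotProduct_add, Matrix.smul_mulVec, Matrix.one_mulVec]
    have h1 : 0 ≤ c ⬝ᵥ ((t * mfun d k hk p) • c) := by
      rw [dotProduct_smul]
      refine smul_nonneg htm ?_
      exact Finset.sum_nonneg fun i _ => mul_self_nonneg (c i)
    exact add_nonneg (hpsd c) h1
  · intro i
    rw [moveFun_diag]
    have h2 := mfun_le hk p i
    have h3 : t * mfun d k hk p ≤ mfun d k hk p := by nlinarith
    linarith

lemma moveFun_continuous (hk : 1 ≤ k) :
    Continuous (fun q : ↥(Cset d k) × unitInterval => moveFun d k hk q.1 (q.2 : ℝ)) := by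
  refine Continuous.prodMk ?_ ?_
  · exact (continuous_fst.comp continuous_subtype_val).comp continuous_fst
  · refine Continuous.add ?_ ?_
    · exact continuous_snd.comp (continuous_subtype_val.comp continuous_fst)
    · refine Continuous.smul (M := ℝ) ?_ continuous_const
      exact ((continuous_subtype_val.comp continuous_snd).mul
        ((mfun_continuous hk).comp continuous_fst))

lemma moveFun_zero (hk : 1 ≤ k) (p : ↥(Cset d k)) : moveFun d k hk p 0 = p.1 := by
  simp [moveFun]

lemma moveFun_of_mzero (hk : 1 ≤ k) (p : ↥(Cset d k)) (t : ℝ)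
    (hm : mfun d k hk p = 0) : moveFun d k hk p t = p.1 := by
  simp [moveFun, hm]

end DQAux4

end Aux4DQ

open unitInterval in
/-- For `d ≥ 4` and `1 ≤ k < d − 2`, the inclusion
`∂X_d^k ↪ X_d^k` is a homotopy equivalence; in fact `X_d^k` (strongly) deformation
retracts onto `∂X_d^k`. -/
theorem discQuot_deformation_retracts_onto_boundary (d k : ℕ) (hd : 4 ≤ d)
    (hk : 1 ≤ k) (hkd : k < d - 2) :
    (∃ e : ContinuousMap.HomotopyEquiv (discQuotBoundary d k) (DiscQuot d k),
      ∀ y : discQuotBoundary d k, e.toFun y = (y : DiscQuot d k)) ∧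
    (∃ H : C(DiscQuot d k × unitInterval, DiscQuot d k),
      (∀ x, H (x, 0) = x) ∧
      (∀ x, H (x, 1) ∈ discQuotBoundary d k) ∧
      (∀ x ∈ discQuotBoundary d k, ∀ t, H (x, t) = x)) := by
  classical
  haveI := DQAux4.compactSpace_discQuot d k
  set toC : DiscQuot d k → ↥(DQAux4.Cset d k) :=
    fun q => ⟨DQAux4.PhiQ d k hd q, DQAux4.PhiQ_mem_Cset hd q⟩ with htoC
  have hbij : Function.Bijective toC := by
    constructor
    · intro a b hab
      exact DQAux4.PhiQ_inj hd hkd (congrArg Subtype.val hab)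
    · rintro ⟨p, hp⟩
      obtain ⟨q, hq⟩ := DQAux4.PhiQ_surj hd hkd p hp
      exact ⟨q, Subtype.ext hq⟩
  have hcont : Continuous toC := (DQAux4.PhiQ_continuous hd).subtype_mk _
  let eqv : DiscQuot d k ≃ ↥(DQAux4.Cset d k) := Equiv.ofBijective toC hbij
  let h : DiscQuot d k ≃ₜ ↥(DQAux4.Cset d k) :=
    Continuous.homeoOfEquivCompactToT2 (f := eqv) hcont
  have hhq : ∀ q, (h q : (Fin k → ℝ) × Matrix (Fin k) (Fin k) ℝ) = DQAux4.PhiQ d k hd q :=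
    fun q => rfl
  let Hfun : DiscQuot d k × unitInterval → DiscQuot d k := fun qt =>
    h.symm ⟨DQAux4.moveFun d k hk (h qt.1) (qt.2 : ℝ),
      DQAux4.moveFun_mem hk (h qt.1) _ qt.2.2.1 qt.2.2.2⟩
  have Hcont : Continuous Hfun := by
    refine h.symm.continuous.comp ?_
    refine Continuous.subtype_mk ?_ _
    exact (DQAux4.moveFun_continuous hk).comp
      ((h.continuous.comp continuous_fst).prodMk continuous_snd)
  have hbd : ∀ q : DiscQuot d k, q ∈ discQuotBoundary d k ↔
      ∃ i, (((h q : (Fin k → ℝ) × Matrix (Fin k) (Fin k) ℝ)).1 i)^2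
        + ((h q : (Fin k → ℝ) × Matrix (Fin k) (Fin k) ℝ)).2 i i = 1 := by
    intro q
    rw [DQAux4.mem_boundary_iff hd q]
    simp only [hhq]
  have H0 : ∀ x, Hfun (x, 0) = x := by
    intro x
    have h1 : (⟨DQAux4.moveFun d k hk (h x) ((0 : unitInterval) : ℝ),
        DQAux4.moveFun_mem hk (h x) _ (by norm_num) (by norm_num)⟩ : ↥(DQAux4.Cset d k))
        = h x := by
      refine Subtype.ext ?_
      show DQAux4.moveFun d k hk (h x) ((0 : unitInterval) : ℝ) = (h x : _)
      rw [show ((0 : unitInterval) : ℝ) = 0 from rfl]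
      exact DQAux4.moveFun_zero hk (h x)
    show h.symm _ = x
    rw [h1]
    exact h.symm_apply_apply x
  have H1 : ∀ x, Hfun (x, 1) ∈ discQuotBoundary d k := by
    intro x
    rw [hbd]
    have h2 : h (Hfun (x, 1)) = ⟨DQAux4.moveFun d k hk (h x) ((1 : unitInterval) : ℝ),
        DQAux4.moveFun_mem hk (h x) _ (by norm_num) (by norm_num)⟩ :=
      h.apply_symm_apply _
    obtain ⟨i, hi⟩ := DQAux4.mfun_exists hk (h x)
    refine ⟨i, ?_⟩
    rw [h2]
    show ((DQAux4.moveFun d k hk (h x) ((1 : unitInterval) : ℝ)).1 i)^2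
        + (DQAux4.moveFun d k hk (h x) ((1 : unitInterval) : ℝ)).2 i i = 1
    rw [DQAux4.moveFun_diag]
    rw [show ((1 : unitInterval) : ℝ) = 1 from rfl, one_mul, hi]
    ring
  have Hfix : ∀ x ∈ discQuotBoundary d k, ∀ t : unitInterval, Hfun (x, t) = x := by
    intro x hx t
    obtain ⟨i, hi⟩ := (hbd x).mp hx
    have hm : DQAux4.mfun d k hk (h x) = 0 := by
      refine le_antisymm ?_ (DQAux4.mfun_nonneg hk (h x))
      have := DQAux4.mfun_le hk (h x) i
      rw [hi] at this
      linarith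
    have h1 : (⟨DQAux4.moveFun d k hk (h x) (t : ℝ),
        DQAux4.moveFun_mem hk (h x) _ t.2.1 t.2.2⟩ : ↥(DQAux4.Cset d k)) = h x := by
      refine Subtype.ext ?_
      show DQAux4.moveFun d k hk (h x) (t : ℝ) = (h x : _)
      exact DQAux4.moveFun_of_mzero hk (h x) _ hm
    show h.symm _ = x
    rw [h1]
    exact h.symm_apply_apply x
  have hsnd : ∃ H : C(DiscQuot d k × unitInterval, DiscQuot d k),
      (∀ x, H (x, 0) = x) ∧
      (∀ x, H (x, 1) ∈ discQuotBoundary d k) ∧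
      (∀ x ∈ discQuotBoundary d k, ∀ t, H (x, t) = x) :=
    ⟨⟨Hfun, Hcont⟩, H0, H1, Hfix⟩
  refine ⟨?_, hsnd⟩
  let incl : C(↥(discQuotBoundary d k), DiscQuot d k) := ⟨Subtype.val, continuous_subtype_val⟩
  let retr : C(DiscQuot d k, ↥(discQuotBoundary d k)) :=
    ⟨fun q => ⟨Hfun (q, 1), H1 q⟩, by
      refine Continuous.subtype_mk ?_ _
      exact Hcont.comp (continuous_id.prodMk continuous_const)⟩
  have hretr_incl : retr.comp incl = ContinuousMap.id _ := by
    ext y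
    exact congrArg Subtype.val (Subtype.ext (Hfix y.1 y.2 1) :
      (⟨Hfun ((y : DiscQuot d k), 1), H1 _⟩ : ↥(discQuotBoundary d k)) = y)
  refine ⟨⟨incl, retr, ?_, ?_⟩, fun y => rfl⟩
  · rw [hretr_incl]
  · refine ⟨⟨⟨fun p => Hfun (p.2, unitInterval.symm p.1), ?_⟩, ?_, ?_⟩⟩
    · exact Hcont.comp (continuous_snd.prodMk
        (unitInterval.continuous_symm.comp continuous_fst))
    · intro q
      show Hfun (q, unitInterval.symm 0) = incl (retr q)
      rw [unitInterval.symm_zero]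
      rfl
    · intro q
      show Hfun (q, unitInterval.symm 1) = q
      rw [unitInterval.symm_one]
      exact H0 q
end
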